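/- Let α ∈ S_d^+, t > 0, u ∈ S_d^{++}. Then ψ(t,u) := u(I + 2tαu)⁻¹ = (u⁻¹ + 2tα)⁻¹ is symmetric positive definite, and φ(t,u) := p·log det(I + 2tαu) satisfies the semigroup/flow properties ψ(t+s, u) = ψ(t, ψ(s,u)) and φ(t+s, u) = φ(t, ψ(s,u)) + φ(s, u) for all s, t ≥ 0. -/

import Mathlib

open Matrix

/-- `ψ(t, w) = w (I + 2 t α w)⁻¹`, the state part of the Wishart flow with `β = 0`. -/
noncomputable def wishartPsi {d : ℕ} (α : Matrix (Fin d) (Fin d) ℝ) (t : ℝ)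
    (w : Matrix (Fin d) (Fin d) ℝ) : Matrix (Fin d) (Fin d) ℝ :=
  w * (1 + (2 * t) • (α * w))⁻¹

/-- `φ(t, w) = p log det (I + 2 t α w)`. -/
noncomputable def wishartPhi {d : ℕ} (p : ℝ) (α : Matrix (Fin d) (Fin d) ℝ) (t : ℝ)
    (w : Matrix (Fin d) (Fin d) ℝ) : ℝ :=
  p * Real.log (1 + (2 * t) • (α * w)).det

lemma psd_smul {d : ℕ} {α : Matrix (Fin d) (Fin d) ℝ} (hα : α.PosSemidef) {c : ℝ}
    (hc : 0 ≤ c) : (c • α).PosSemidef := by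
  refine ⟨?_, fun x => ?_⟩
  · unfold Matrix.IsHermitian
    rw [conjTranspose_smul, hα.1.eq]
    simp
  · exact (hα.smul hc).2 x

/-- Key lemma: for `t ≥ 0`, `u⁻¹ + 2tα` is positive definite and
`ψ(t,u) = (u⁻¹ + 2tα)⁻¹`. -/
lemma psi_key {d : ℕ} {α u : Matrix (Fin d) (Fin d) ℝ}
    (hα : α.PosSemidef) (hu : u.PosDef) {t : ℝ} (ht : 0 ≤ t) :
    (u⁻¹ + (2 * t) • α).PosDef ∧
      (1 + (2 * t) • (α * u)) = (u⁻¹ + (2 * t) • α) * u ∧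
      wishartPsi α t u = (u⁻¹ + (2 * t) • α)⁻¹ := by
  have hudet : IsUnit u.det := isUnit_iff_ne_zero.2 hu.det_pos.ne'
  have hpd : (u⁻¹ + (2 * t) • α).PosDef :=
    hu.inv.add_posSemidef (psd_smul hα (by positivity))
  have hB : (1 + (2 * t) • (α * u)) = (u⁻¹ + (2 * t) • α) * u := by
    rw [Matrix.add_mul, Matrix.nonsing_inv_mul _ hudet, Matrix.smul_mul]
  refine ⟨hpd, hB, ?_⟩
  unfold wishartPsi
  rw [hB, Matrix.mul_inv_rev, ← Matrix.mul_assoc, Matrix.mul_nonsing_inv _ hudet,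
    Matrix.one_mul]

lemma det_pos_key {d : ℕ} {α u : Matrix (Fin d) (Fin d) ℝ}
    (hα : α.PosSemidef) (hu : u.PosDef) {t : ℝ} (ht : 0 ≤ t) :
    0 < (1 + (2 * t) • (α * u)).det := by
  obtain ⟨hpd, hB, -⟩ := psi_key hα hu ht
  rw [hB, Matrix.det_mul]
  exact mul_pos hpd.det_pos hu.det_pos

theorem stmt_18 {d : ℕ} (α u : Matrix (Fin d) (Fin d) ℝ) (p : ℝ) (hp : 0 ≤ p)
    (hα : α.PosSemidef) (hu : u.PosDef) :
    (∀ t : ℝ, 0 < t →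
      wishartPsi α t u = (u⁻¹ + (2 * t) • α)⁻¹ ∧ (wishartPsi α t u).PosDef) ∧
    (∀ s t : ℝ, 0 ≤ s → 0 ≤ t →
      wishartPsi α (t + s) u = wishartPsi α t (wishartPsi α s u) ∧
      wishartPhi p α (t + s) u =
        wishartPhi p α t (wishartPsi α s u) + wishartPhi p α s u) := by
  constructor
  · intro t ht
    obtain ⟨hpd, -, hψ⟩ := psi_key hα hu ht.le
    exact ⟨hψ, hψ ▸ hpd.inv⟩
  · intro s t hs ht
    obtain ⟨hpds, hBs, hψs⟩ := psi_key hα hu hs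
    have hψspd : (wishartPsi α s u).PosDef := hψs ▸ hpds.inv
    obtain ⟨hpdt, hBt, hψt⟩ := psi_key hα hψspd ht
    have hinv : (wishartPsi α s u)⁻¹ = u⁻¹ + (2 * s) • α := by
      rw [hψs, Matrix.nonsing_inv_nonsing_inv _ (isUnit_iff_ne_zero.2 hpds.det_pos.ne')]
    have hsum : u⁻¹ + (2 * s) • α + (2 * t) • α = u⁻¹ + (2 * (t + s)) • α := by
      rw [add_assoc, ← add_smul]; ring_nf
    constructor
    · obtain ⟨-, -, hψts⟩ := psi_key hα hu (add_nonneg ht hs)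
      rw [hψts, hψt, hinv, hsum]
    · -- φ semigroup
      have hdetBs : (1 + (2 * s) • (α * u)).det ≠ 0 := (det_pos_key hα hu hs).ne'
      have hdetBt : (1 + (2 * t) • (α * wishartPsi α s u)).det ≠ 0 :=
        (det_pos_key hα hψspd ht).ne'
      have hBsunit : IsUnit (1 + (2 * s) • (α * u)).det := isUnit_iff_ne_zero.2 hdetBs
      have hprod : (1 + (2 * t) • (α * wishartPsi α s u)) * (1 + (2 * s) • (α * u)) =
          1 + (2 * (t + s)) • (α * u) := by
        unfold wishartPsi
        rw [Matrix.add_mul, Matrix.one_mul, Matrix.smul_mul, Matrix.mul_assoc α,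
          Matrix.mul_assoc u, Matrix.nonsing_inv_mul _ hBsunit, Matrix.mul_one]
        rw [add_assoc, ← add_smul]
        ring_nf
      unfold wishartPhi
      rw [← hprod, Matrix.det_mul, Real.log_mul hdetBt hdetBs, mul_add]
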